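/- (Lemma on recovering weights by limits, Lemma 3) Let a fully-connected layered feed-forward network of depth L with one source and one sink have activation f(x) = e^x − 1 and weight family W ∈ W_o, with measured function F = F^L_1. Then for every l ∈ {1,…,L}, every i ∈ N^l and every j ∈ N^{l−1}, the function G^l_{ij}(x) is well defined for all sufficiently large x and satisfies lim_{x → +∞} G^l_{ij}(x) = w^l_{ij}. -/

import Mathlib

open Finset Filter

/-- Node outputs of the fully-connected layered feed-forward network with activation
`f x = e^x - 1` and layer sizes `n 0, …, n L`: `expOut n w 0 i x = x` (the source) and
`expOut n w (l+1) i x = exp (∑_{j < n l} w^{l+1}_{ij} · expOut n w l j x) - 1`, where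
`w (l+1) i j` is the weight of the edge from node `j` of layer `l` to node `i` of layer
`l + 1` (nodes are numbered `0, …, n l - 1`; the "first" node of a layer is node `0`). -/
noncomputable def expOut (n : ℕ → ℕ) (w : ℕ → ℕ → ℕ → ℝ) : ℕ → ℕ → ℝ → ℝ
  | 0, _, x => x
  | l + 1, i, x =>
      Real.exp (∑ j ∈ Finset.range (n l), w (l + 1) i j * expOut n w l j x) - 1

/-- The class `W_o` of weight families: all weights are positive and, in each layer and for
each source node `j`, the weights are strictly decreasing in the destination node index
(`w^l_{1j} > w^l_{2j} > … > w^l_{n_l j}` in 1-based notation). -/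
def Wo (L : ℕ) (n : ℕ → ℕ) (w : ℕ → ℕ → ℕ → ℝ) : Prop :=
  (∀ l < L, ∀ i < n (l + 1), ∀ j < n l, 0 < w (l + 1) i j) ∧
  (∀ l < L, ∀ j < n l, ∀ i i' : ℕ, i < i' → i' < n (l + 1) → w (l + 1) i' j < w (l + 1) i j)

lemma aux_sum_atTop {m : ℕ} (hm : 0 < m) {c : ℕ → ℝ} (hc : ∀ j < m, 0 ≤ c j)
    (hc0 : 0 < c 0) {g : ℕ → ℝ → ℝ} (hg : ∀ j, j < m → Tendsto (g j) atTop atTop) :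
    Tendsto (fun x => ∑ j ∈ Finset.range m, c j * g j x) atTop atTop := by
  have h0 : Tendsto (fun x => c 0 * g 0 x) atTop atTop := (hg 0 hm).const_mul_atTop hc0
  refine tendsto_atTop_mono' atTop ?_ h0
  have hev : ∀ᶠ x in atTop, ∀ j ∈ Finset.range m, 0 ≤ g j x := by
    rw [Filter.eventually_all_finset]
    intro j hj
    exact (hg j (Finset.mem_range.mp hj)).eventually_ge_atTop 0
  filter_upwards [hev] with x hx
  exact Finset.single_le_sum
    (fun j hj => mul_nonneg (hc j (Finset.mem_range.mp hj)) (hx j hj))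
    (Finset.mem_range.mpr hm)

lemma expOut_tendsto (L : ℕ) (n : ℕ → ℕ) (w : ℕ → ℕ → ℕ → ℝ)
    (hw1 : ∀ l < L, ∀ i < n (l + 1), ∀ j < n l, 0 < w (l + 1) i j)
    (hpos : ∀ l ≤ L, 0 < n l) :
    ∀ l ≤ L, ∀ i < n l, Tendsto (expOut n w l i) atTop atTop := by
  intro l
  induction l with
  | zero => intro _ i _; simp [expOut]; exact tendsto_id
  | succ l ih =>
    intro hl i hi
    have hlL : l ≤ L := Nat.le_of_succ_le hl
    have hsum : Tendsto (fun x => ∑ j ∈ Finset.range (n l), w (l+1) i j * expOut n w l j x)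
        atTop atTop :=
      aux_sum_atTop (hpos l hlL) (fun j hj => (hw1 l hl i hi j hj).le)
        (hw1 l hl i hi 0 (hpos l hlL)) (fun j hj => ih hlL j hj)
    have h2 := tendsto_atTop_add_const_right atTop (-1) (Real.tendsto_exp_atTop.comp hsum)
    exact h2.congr (fun x => by simp [expOut, sub_eq_add_neg])

lemma ratio_exp {S S' : ℝ → ℝ} (hgap : Tendsto (fun x => S x - S' x) atTop atTop)
    (hS' : Tendsto S' atTop atTop) :
    Tendsto (fun x => (Real.exp (S' x) - 1) / Real.exp (S x)) atTop (nhds 0) := by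
  have hbot : Tendsto (fun x => S' x - S x) atTop atBot := by
    have h := tendsto_neg_atTop_atBot.comp hgap
    have he : (Neg.neg ∘ fun x => S x - S' x) = fun x => S' x - S x := by
      funext x; simp [neg_sub]
    rwa [he] at h
  have hlim : Tendsto (fun x => Real.exp (S' x - S x)) atTop (nhds 0) :=
    Real.tendsto_exp_atBot.comp hbot
  apply squeeze_zero' ?_ ?_ hlim
  · filter_upwards [hS'.eventually_ge_atTop 0] with x hx
    exact div_nonneg (by linarith [Real.one_le_exp hx]) (Real.exp_pos _).le
  · filter_upwards with x
    rw [Real.exp_sub]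
    gcongr
    linarith [Real.exp_pos (S' x)]

lemma ratio_expm1 {S S' : ℝ → ℝ} (hgap : Tendsto (fun x => S x - S' x) atTop atTop)
    (hS : Tendsto S atTop atTop) (hS' : Tendsto S' atTop atTop) :
    Tendsto (fun x => (Real.exp (S' x) - 1) / (Real.exp (S x) - 1)) atTop (nhds 0) := by
  have h1 := ratio_exp hgap hS'
  have h2 : Tendsto (fun x => 2 * ((Real.exp (S' x) - 1) / Real.exp (S x))) atTop (nhds 0) := by
    simpa using h1.const_mul 2
  apply squeeze_zero' ?_ ?_ h2
  · filter_upwards [hS'.eventually_ge_atTop 0, hS.eventually_ge_atTop 1] with x hx hx1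
    have hb : (2:ℝ) ≤ Real.exp (S x) := by
      calc (2:ℝ) ≤ Real.exp 1 := by linarith [Real.add_one_le_exp (1:ℝ)]
      _ ≤ Real.exp (S x) := Real.exp_le_exp.mpr hx1
    exact div_nonneg (by linarith [Real.one_le_exp hx]) (by linarith)
  · filter_upwards [hS'.eventually_ge_atTop 0, hS.eventually_ge_atTop 1] with x hx hx1
    have ha : (0:ℝ) ≤ Real.exp (S' x) - 1 := by linarith [Real.one_le_exp hx]
    have hb : (2:ℝ) ≤ Real.exp (S x) := by
      calc (2:ℝ) ≤ Real.exp 1 := by linarith [Real.add_one_le_exp (1:ℝ)]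
      _ ≤ Real.exp (S x) := Real.exp_le_exp.mpr hx1
    rw [mul_div_assoc'] -- 2 * (a / b) = 2 * a / b
    rw [div_le_div_iff₀ (by linarith) (by linarith)]
    nlinarith

lemma logP {a : ℝ} (ha : 0 < a) {S R : ℝ → ℝ} (hS : Tendsto S atTop atTop)
    (hR : Tendsto (fun x => R x / Real.exp (S x)) atTop (nhds 0)) :
    (∀ᶠ x in atTop, 0 < a * (Real.exp (S x) - 1) + R x) ∧
      Tendsto (fun x => Real.log (a * (Real.exp (S x) - 1) + R x) - S x) atTop
        (nhds (Real.log a)) := by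
  set u : ℝ → ℝ := fun x => R x / Real.exp (S x) - a / Real.exp (S x) with hu
  have hexp : Tendsto (fun x => Real.exp (S x)) atTop atTop := Real.tendsto_exp_atTop.comp hS
  have hu0 : Tendsto u atTop (nhds 0) := by
    have h2 : Tendsto (fun x => a / Real.exp (S x)) atTop (nhds 0) :=
      tendsto_const_nhds.div_atTop hexp
    simpa using hR.sub h2
  have hke : ∀ x, a * (Real.exp (S x) - 1) + R x = Real.exp (S x) * (a + u x) := by
    intro x
    have hne : Real.exp (S x) ≠ 0 := (Real.exp_pos _).ne'
    simp only [hu]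
    field_simp [hu]
    ring
  have hau : Tendsto (fun x => a + u x) atTop (nhds a) := by
    simpa using tendsto_const_nhds.add hu0
  have hev : ∀ᶠ x in atTop, 0 < a + u x := hau.eventually (eventually_gt_nhds ha)
  constructor
  · filter_upwards [hev] with x hx
    rw [hke x]
    exact mul_pos (Real.exp_pos _) hx
  · have hlog : Tendsto (fun x => Real.log (a + u x)) atTop (nhds (Real.log a)) :=
      (Real.continuousAt_log ha.ne').tendsto.comp hau
    refine hlog.congr' ?_
    filter_upwards [hev] with x hx
    rw [hke x, Real.log_mul (Real.exp_pos _).ne' hx.ne', Real.log_exp]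
    ring

lemma iterLog (L : ℕ) (n : ℕ → ℕ) (w : ℕ → ℕ → ℕ → ℝ)
    (hw1 : ∀ l < L, ∀ i < n (l + 1), ∀ j < n l, 0 < w (l + 1) i j)
    (hw2 : ∀ l < L, ∀ j < n l, ∀ i i' : ℕ, i < i' → i' < n (l + 1) → w (l + 1) i' j < w (l + 1) i j)
    (hpos : ∀ l ≤ L, 0 < n l) :
    ∀ d, 1 ≤ d → d < L → ∃ c, Tendsto (fun x =>
      Real.log^[d] (expOut n w L 0 x) -
        ∑ j ∈ Finset.range (n (L - d)), w (L - d + 1) 0 j * expOut n w (L - d) j x)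
      atTop (nhds c) := by
  have hT := expOut_tendsto L n w hw1 hpos
  intro d
  induction d with
  | zero => intro h; omega
  | succ d ih =>
    intro _ hdL
    rcases Nat.eq_zero_or_pos d with rfl | hd0
    · -- base case d + 1 = 1
      obtain ⟨K, hK⟩ : ∃ K, L = K + 1 := ⟨L - 1, by omega⟩
      subst hK
      have e1 : K + 1 - 1 = K := by omega
      rw [e1]
      have hS : Tendsto (fun x => ∑ j ∈ Finset.range (n K), w (K + 1) 0 j * expOut n w K j x)
          atTop atTop :=
        aux_sum_atTop (hpos K (by omega)) (fun j hj => (hw1 K (by omega) 0 (hpos (K+1) le_rfl) j hj).le)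
          (hw1 K (by omega) 0 (hpos (K+1) le_rfl) 0 (hpos K (by omega)))
          (fun j hj => hT K (by omega) j hj)
      have hR : Tendsto (fun x => (0:ℝ) / Real.exp
          (∑ j ∈ Finset.range (n K), w (K + 1) 0 j * expOut n w K j x)) atTop (nhds 0) := by
        simpa using (tendsto_const_nhds : Tendsto (fun _ : ℝ => (0:ℝ)) atTop (nhds 0))
      obtain ⟨-, h⟩ := logP one_pos hS hR
      refine ⟨Real.log 1, h.congr (fun x => ?_)⟩
      simp [expOut, Function.iterate_one]
    · -- inductive step
      obtain ⟨c, hc⟩ := ih hd0 (by omega)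
      set k := L - (d + 1) with hk
      have e1 : L - d = k + 1 := by omega
      rw [e1] at hc
      have hkL : k < L := by omega
      have hk1L : k + 1 < L := by omega
      -- S : target sum at layer k
      set S : ℝ → ℝ := fun x => ∑ j ∈ Finset.range (n k), w (k + 1) 0 j * expOut n w k j x
        with hSdef
      have hS : Tendsto S atTop atTop :=
        aux_sum_atTop (hpos k hkL.le) (fun j hj => (hw1 k hkL 0 (hpos (k+1) hk1L.le) j hj).le)
          (hw1 k hkL 0 (hpos (k+1) hk1L.le) 0 (hpos k hkL.le))
          (fun j hj => hT k hkL.le j hj)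
      set g : ℝ → ℝ := fun x => Real.log^[d] (expOut n w L 0 x) -
        ∑ j ∈ Finset.range (n (k+1)), w (k + 1 + 1) 0 j * expOut n w (k+1) j x with hgdef
      set a : ℝ := w (k + 1 + 1) 0 0 with hadef
      have ha : 0 < a := hw1 (k+1) hk1L 0 (hpos (k+1+1) (by omega)) 0 (hpos (k+1) hk1L.le)
      set R : ℝ → ℝ := fun x =>
        (∑ j ∈ Finset.Ico 1 (n (k+1)), w (k + 1 + 1) 0 j * expOut n w (k+1) j x) + g x with hRdef
      -- key pointwise identity
      have hkey : ∀ x, Real.log^[d] (expOut n w L 0 x) = a * (Real.exp (S x) - 1) + R x := by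
        intro x
        have hsplit : ∑ j ∈ Finset.range (n (k+1)), w (k + 1 + 1) 0 j * expOut n w (k+1) j x
            = a * expOut n w (k+1) 0 x
              + ∑ j ∈ Finset.Ico 1 (n (k+1)), w (k + 1 + 1) 0 j * expOut n w (k+1) j x := by
          rw [Finset.range_eq_Ico, Finset.sum_eq_sum_Ico_succ_bot (hpos (k+1) hk1L.le)]
        have hout : expOut n w (k+1) 0 x = Real.exp (S x) - 1 := by
          simp [expOut, hSdef]
        simp only [hRdef, hgdef]
        rw [hsplit, hout]
        ring
      -- R / exp S → 0
      have hratio : ∀ jj, jj ∈ Finset.Ico 1 (n (k+1)) →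
          Tendsto (fun x => w (k + 1 + 1) 0 jj * (expOut n w (k+1) jj x / Real.exp (S x)))
            atTop (nhds (w (k + 1 + 1) 0 jj * 0)) := by
        intro jj hjj
        rw [Finset.mem_Ico] at hjj
        have hgap : Tendsto (fun x => S x -
            ∑ t ∈ Finset.range (n k), w (k + 1) jj t * expOut n w k t x) atTop atTop := by
          have := aux_sum_atTop (hpos k hkL.le)
            (c := fun t => w (k + 1) 0 t - w (k + 1) jj t)
            (fun t ht => (sub_pos.mpr (hw2 k hkL t ht 0 jj hjj.1 hjj.2)).le)
            (sub_pos.mpr (hw2 k hkL 0 (hpos k hkL.le) 0 jj hjj.1 hjj.2))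
            (fun t ht => hT k hkL.le t ht)
          refine this.congr (fun x => ?_)
          simp only [hSdef, sub_mul, Finset.sum_sub_distrib]
        have hS' : Tendsto (fun x => ∑ t ∈ Finset.range (n k), w (k + 1) jj t * expOut n w k t x)
            atTop atTop :=
          aux_sum_atTop (hpos k hkL.le) (fun t ht => (hw1 k hkL jj hjj.2 t ht).le)
            (hw1 k hkL jj hjj.2 0 (hpos k hkL.le)) (fun t ht => hT k hkL.le t ht)
        have h0 := ratio_exp hgap hS'
        have heq : ∀ x, (Real.exp (∑ t ∈ Finset.range (n k), w (k + 1) jj t * expOut n w k t x)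
            - 1) / Real.exp (S x) = expOut n w (k+1) jj x / Real.exp (S x) := by
          intro x; simp [expOut]
        exact (h0.congr heq).const_mul _
      have hRS : Tendsto (fun x => R x / Real.exp (S x)) atTop (nhds 0) := by
        have hsum : Tendsto (fun x => ∑ jj ∈ Finset.Ico 1 (n (k+1)),
            w (k + 1 + 1) 0 jj * (expOut n w (k+1) jj x / Real.exp (S x))) atTop
              (nhds (∑ jj ∈ Finset.Ico 1 (n (k+1)), w (k + 1 + 1) 0 jj * 0)) :=
          tendsto_finset_sum _ hratio
        have hgS : Tendsto (fun x => g x / Real.exp (S x)) atTop (nhds 0) :=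
          hc.div_atTop (Real.tendsto_exp_atTop.comp hS)
        have := hsum.add hgS
        simp only [mul_zero, Finset.sum_const_zero, add_zero] at this
        refine this.congr (fun x => ?_)
        simp only [hRdef, add_div, Finset.sum_div, mul_div_assoc]
      obtain ⟨-, h⟩ := logP ha hS hRS
      refine ⟨Real.log a, h.congr (fun x => ?_)⟩
      rw [Function.iterate_succ_apply', ← hkey x]

/-- **(Lemma 3, lemma2: recovering weights by limits).** For a fully-connected layered
feed-forward network of depth `L ≥ 1` with one source and one sink, activation
`f x = e^x - 1`, weight family `W ∈ W_o` and measured function `F = expOut n w L 0`, for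
every layer `l ∈ {1, …, L}`, node `i` of layer `l` and node `j` of layer `l - 1`, the
quantity
`G^l_{ij} (x) = (log (log^{∘(L-l)} (F x) - ∑_{i' < i} w^{l+1}_{1 i'} F^l_{i'} (x))
  - ∑_{j' < j} w^l_{i j'} F^{l-1}_{j'} (x)) / F^{l-1}_j (x)`
is well defined for all sufficiently large `x` (the denominator is nonzero and the argument
of the outer logarithm is positive) and tends to `w^l_{ij}` as `x → +∞`. -/
theorem stmt_13 (L : ℕ) (hL : 1 ≤ L) (n : ℕ → ℕ) (hn0 : n 0 = 1) (hnL : n L = 1)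
    (hpos : ∀ l ≤ L, 0 < n l) (w : ℕ → ℕ → ℕ → ℝ) (hw : Wo L n w)
    (l : ℕ) (hl1 : 1 ≤ l) (hlL : l ≤ L)
    (i : ℕ) (hi : i < n l) (j : ℕ) (hj : j < n (l - 1)) :
    (∀ᶠ x in atTop,
      expOut n w (l - 1) j x ≠ 0 ∧
        0 < Real.log^[L - l] (expOut n w L 0 x) -
            ∑ i' ∈ Finset.range i, w (l + 1) 0 i' * expOut n w l i' x) ∧
    Tendsto
      (fun x =>
        (Real.log (Real.log^[L - l] (expOut n w L 0 x) -
            ∑ i' ∈ Finset.range i, w (l + 1) 0 i' * expOut n w l i' x) -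
          ∑ j' ∈ Finset.range j, w l i j' * expOut n w (l - 1) j' x) /
        expOut n w (l - 1) j x)
      atTop (nhds (w l i j)) := by
  obtain ⟨hw1, hw2⟩ := hw
  have hT := expOut_tendsto L n w hw1 hpos
  obtain ⟨k, rfl⟩ : ∃ k, l = k + 1 := ⟨l - 1, by omega⟩
  simp only [Nat.add_sub_cancel] at hj ⊢
  have hkL : k < L := by omega
  have hFj : Tendsto (expOut n w k j) atTop atTop := hT k hkL.le j hj
  set Si : ℝ → ℝ := fun x => ∑ j' ∈ Finset.range (n k), w (k + 1) i j' * expOut n w k j' x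
    with hSidef
  have hSi : Tendsto Si atTop atTop :=
    aux_sum_atTop (hpos k hkL.le) (fun t ht => (hw1 k hkL i hi t ht).le)
      (hw1 k hkL i hi 0 (hpos k hkL.le)) (fun t ht => hT k hkL.le t ht)
  set E : ℝ → ℝ := fun x => Real.log^[L - (k + 1)] (expOut n w L 0 x) -
      ∑ i' ∈ Finset.range i, w (k + 1 + 1) 0 i' * expOut n w (k + 1) i' x with hEdef
  have hMain : ∃ c₂, (∀ᶠ x in atTop, 0 < E x) ∧
      Tendsto (fun x => Real.log (E x) - Si x) atTop (nhds c₂) := by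
    by_cases hlt : k + 1 < L
    · obtain ⟨c, hc⟩ := iterLog L n w hw1 hw2 hpos (L - (k + 1)) (by omega) (by omega)
      have e1 : L - (L - (k + 1)) = k + 1 := by omega
      rw [e1] at hc
      set a := w (k + 1 + 1) 0 i with hadef
      have ha : 0 < a := hw1 (k + 1) hlt 0 (hpos (k + 1 + 1) (by omega)) i hi
      set g : ℝ → ℝ := fun x => Real.log^[L - (k + 1)] (expOut n w L 0 x) -
          ∑ jj ∈ Finset.range (n (k + 1)), w (k + 1 + 1) 0 jj * expOut n w (k + 1) jj x
        with hgdef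
      set R : ℝ → ℝ := fun x =>
          (∑ i' ∈ Finset.Ico (i + 1) (n (k + 1)), w (k + 1 + 1) 0 i' * expOut n w (k + 1) i' x)
            + g x with hRdef
      have hout : ∀ x, expOut n w (k + 1) i x = Real.exp (Si x) - 1 := by
        intro x; simp [expOut, hSidef]
      have hkey : ∀ x, E x = a * (Real.exp (Si x) - 1) + R x := by
        intro x
        have h1 : ∑ i' ∈ Finset.Ico i (n (k + 1)), w (k + 1 + 1) 0 i' * expOut n w (k + 1) i' x
            = (∑ jj ∈ Finset.range (n (k + 1)), w (k + 1 + 1) 0 jj * expOut n w (k + 1) jj x)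
              - ∑ i' ∈ Finset.range i, w (k + 1 + 1) 0 i' * expOut n w (k + 1) i' x :=
          Finset.sum_Ico_eq_sub _ hi.le
        have h2 : ∑ i' ∈ Finset.Ico i (n (k + 1)), w (k + 1 + 1) 0 i' * expOut n w (k + 1) i' x
            = w (k + 1 + 1) 0 i * expOut n w (k + 1) i x
              + ∑ i' ∈ Finset.Ico (i + 1) (n (k + 1)), w (k + 1 + 1) 0 i' * expOut n w (k + 1) i' x :=
          Finset.sum_eq_sum_Ico_succ_bot hi _
        simp only [hEdef, hRdef, hgdef, hadef]
        rw [← hout x]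
        linarith [h1, h2]
      have hratio : ∀ jj ∈ Finset.Ico (i + 1) (n (k + 1)),
          Tendsto (fun x => w (k + 1 + 1) 0 jj * (expOut n w (k + 1) jj x / Real.exp (Si x)))
            atTop (nhds (w (k + 1 + 1) 0 jj * 0)) := by
        intro jj hjj
        rw [Finset.mem_Ico] at hjj
        have hij : i < jj := hjj.1
        have hgap : Tendsto (fun x => Si x -
            ∑ t ∈ Finset.range (n k), w (k + 1) jj t * expOut n w k t x) atTop atTop := by
          have := aux_sum_atTop (hpos k hkL.le)
            (c := fun t => w (k + 1) i t - w (k + 1) jj t)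
            (fun t ht => (sub_pos.mpr (hw2 k hkL t ht i jj hij hjj.2)).le)
            (sub_pos.mpr (hw2 k hkL 0 (hpos k hkL.le) i jj hij hjj.2))
            (fun t ht => hT k hkL.le t ht)
          refine this.congr (fun x => ?_)
          simp only [hSidef, sub_mul, Finset.sum_sub_distrib]
        have hS' : Tendsto (fun x => ∑ t ∈ Finset.range (n k), w (k + 1) jj t * expOut n w k t x)
            atTop atTop :=
          aux_sum_atTop (hpos k hkL.le) (fun t ht => (hw1 k hkL jj hjj.2 t ht).le)
            (hw1 k hkL jj hjj.2 0 (hpos k hkL.le)) (fun t ht => hT k hkL.le t ht)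
        have h0 := ratio_exp hgap hS'
        have heq : ∀ x, (Real.exp (∑ t ∈ Finset.range (n k), w (k + 1) jj t * expOut n w k t x)
            - 1) / Real.exp (Si x) = expOut n w (k + 1) jj x / Real.exp (Si x) := by
          intro x; simp [expOut]
        exact (h0.congr heq).const_mul _
      have hRS : Tendsto (fun x => R x / Real.exp (Si x)) atTop (nhds 0) := by
        have hsum := tendsto_finset_sum (Finset.Ico (i + 1) (n (k + 1))) hratio
        have hgS : Tendsto (fun x => g x / Real.exp (Si x)) atTop (nhds 0) :=
          hc.div_atTop (Real.tendsto_exp_atTop.comp hSi)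
        have htot := hsum.add hgS
        simp only [mul_zero, Finset.sum_const_zero, add_zero] at htot
        refine htot.congr (fun x => ?_)
        simp only [hRdef, add_div, Finset.sum_div, mul_div_assoc]
      obtain ⟨hp, hlim⟩ := logP ha hSi hRS
      refine ⟨Real.log a, ?_, ?_⟩
      · filter_upwards [hp] with x hx
        rw [hkey x]; exact hx
      · refine hlim.congr (fun x => ?_)
        rw [hkey x]
    · have hLk : L = k + 1 := by omega
      subst hLk
      have hi0 : i = 0 := by omega
      subst hi0
      have hR0 : Tendsto (fun x => (0 : ℝ) / Real.exp (Si x)) atTop (nhds 0) := by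
        simp only [zero_div]; exact tendsto_const_nhds
      obtain ⟨hp, hlim⟩ := logP one_pos hSi hR0
      have hkey : ∀ x, E x = 1 * (Real.exp (Si x) - 1) + 0 := by
        intro x
        simp only [hEdef, Nat.sub_self, Function.iterate_zero_apply, Finset.range_zero,
          Finset.sum_empty, sub_zero, one_mul, add_zero]
        simp [expOut, hSidef]
      refine ⟨Real.log 1, ?_, ?_⟩
      · filter_upwards [hp] with x hx
        rw [hkey x]; exact hx
      · refine hlim.congr (fun x => ?_)
        rw [hkey x]
  obtain ⟨c₂, hEpos, hlog⟩ := hMain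
  constructor
  · filter_upwards [hFj.eventually_gt_atTop 0, hEpos] with x h1 h2
    exact ⟨ne_of_gt h1, h2⟩
  · have hfin : ∀ jj ∈ Finset.Ico j (n k),
        Tendsto (fun x => w (k + 1) i jj * (expOut n w k jj x / expOut n w k j x)) atTop
          (nhds (if jj = j then w (k + 1) i j else 0)) := by
      intro jj hjj
      rw [Finset.mem_Ico] at hjj
      rcases eq_or_ne jj j with rfl | hne
      · rw [if_pos rfl]
        have hev : (fun _ : ℝ => w (k + 1) i jj) =ᶠ[atTop]
            (fun x => w (k + 1) i jj * (expOut n w k jj x / expOut n w k jj x)) := by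
          filter_upwards [hFj.eventually_gt_atTop 0] with x hx
          rw [div_self hx.ne', mul_one]
        exact tendsto_const_nhds.congr' hev
      · rw [if_neg hne]
        have hjlt : j < jj := lt_of_le_of_ne hjj.1 (Ne.symm hne)
        obtain ⟨k2, hk2⟩ : ∃ k2, k = k2 + 1 := by
          refine ⟨k - 1, ?_⟩
          rcases Nat.eq_zero_or_pos k with h0 | h1
          · exfalso; rw [h0, hn0] at hjj; omega
          · omega
        have hk2L : k2 < L := by omega
        have hSjj : Tendsto (fun x =>
            ∑ t ∈ Finset.range (n k2), w (k2 + 1) jj t * expOut n w k2 t x) atTop atTop :=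
          aux_sum_atTop (hpos k2 hk2L.le)
            (fun t ht => (hw1 k2 hk2L jj (hk2 ▸ hjj.2) t ht).le)
            (hw1 k2 hk2L jj (hk2 ▸ hjj.2) 0 (hpos k2 hk2L.le))
            (fun t ht => hT k2 hk2L.le t ht)
        have hSj : Tendsto (fun x =>
            ∑ t ∈ Finset.range (n k2), w (k2 + 1) j t * expOut n w k2 t x) atTop atTop :=
          aux_sum_atTop (hpos k2 hk2L.le)
            (fun t ht => (hw1 k2 hk2L j (hk2 ▸ (hj : j < n k)) t ht).le)
            (hw1 k2 hk2L j (hk2 ▸ (hj : j < n k)) 0 (hpos k2 hk2L.le))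
            (fun t ht => hT k2 hk2L.le t ht)
        have hgap : Tendsto (fun x =>
            (∑ t ∈ Finset.range (n k2), w (k2 + 1) j t * expOut n w k2 t x) -
            ∑ t ∈ Finset.range (n k2), w (k2 + 1) jj t * expOut n w k2 t x) atTop atTop := by
          have := aux_sum_atTop (hpos k2 hk2L.le)
            (c := fun t => w (k2 + 1) j t - w (k2 + 1) jj t)
            (fun t ht => (sub_pos.mpr (hw2 k2 hk2L t ht j jj hjlt (hk2 ▸ hjj.2))).le)
            (sub_pos.mpr (hw2 k2 hk2L 0 (hpos k2 hk2L.le) j jj hjlt (hk2 ▸ hjj.2)))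
            (fun t ht => hT k2 hk2L.le t ht)
          refine this.congr (fun x => ?_)
          simp only [sub_mul, Finset.sum_sub_distrib]
        have h0 := ratio_expm1 hgap hSj hSjj
        have heq : ∀ x, (Real.exp (∑ t ∈ Finset.range (n k2), w (k2 + 1) jj t * expOut n w k2 t x)
            - 1) / (Real.exp (∑ t ∈ Finset.range (n k2), w (k2 + 1) j t * expOut n w k2 t x) - 1)
            = expOut n w k jj x / expOut n w k j x := by
          intro x; rw [hk2]; simp [expOut]
        have := (h0.congr heq).const_mul (w (k + 1) i jj)
        simpa using this
    have hsum := tendsto_finset_sum (Finset.Ico j (n k)) hfin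
    have hval : (∑ jj ∈ Finset.Ico j (n k), if jj = j then w (k + 1) i j else 0)
        = w (k + 1) i j := by
      rw [Finset.sum_ite_eq' (Finset.Ico j (n k)) j (fun _ => w (k + 1) i j),
        if_pos (Finset.mem_Ico.mpr ⟨le_rfl, hj⟩)]
    rw [hval] at hsum
    have h0 : Tendsto (fun x => (Real.log (E x) - Si x) / expOut n w k j x) atTop (nhds 0) :=
      hlog.div_atTop hFj
    have htot := h0.add hsum
    rw [zero_add] at htot
    refine htot.congr (fun x => ?_)
    have h1 : ∑ jj ∈ Finset.Ico j (n k), w (k + 1) i jj * expOut n w k jj x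
        = Si x - ∑ j' ∈ Finset.range j, w (k + 1) i j' * expOut n w k j' x := by
      simp only [hSidef]
      exact Finset.sum_Ico_eq_sub _ hj.le
    simp only [← mul_div_assoc]
    rw [← Finset.sum_div, h1, ← add_div, sub_add_sub_cancel]
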